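/- Let G be a finite connected graph with n vertices and m edges, and let H be a Hermitian matrix supported on the arcs of G with entries H_{uv} = h_f·e^{2iγ_f} for f=(u,v), where h_{f⁻¹}=h_f ≥ 0 and γ_{f⁻¹}=-γ_f. Define Γ_u = Σ_{e: o(e)=u} h_e, x_u = 2/(H_{uu} - λ - i·Γ_u), w(e) = √(h_e)·e^{iγ_e}, and the 2m×2m bond scattering matrix U(λ) with entries U_{ef} = i·δ_{e⁻¹,f} - x_{t(e)}·w(e)·w(f) if t(e)=o(f), and 0 otherwise. Then det(I_{2m} - U(λ)) = (-1)^n·2^m·det(λ·I_n - H) / ∏_{u=1}^{n} (H_{uu} - λ - i·Γ_u). -/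

import Mathlib

open Matrix Kronecker

open Kronecker in

lemma det_one_sub_I_smul_invol {A : Type*} [Fintype A] [DecidableEq A]
    (einv : A → A) (hinvol : ∀ e, einv (einv e) = e) (hfix : ∀ e, einv e ≠ e)
    (m : ℕ) (hm : Fintype.card A = 2 * m) :
    ((1 : Matrix A A ℂ) -
      Complex.I • Matrix.of (fun e f => if f = einv e then (1:ℂ) else 0)).det = 2 ^ m := by
  classical
  set s : Setoid A := ⟨fun a b => b = a ∨ b = einv a,
    ⟨fun a => Or.inl rfl,
     fun {a b} hab => hab.elim (fun h1 => Or.inl h1.symm)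
       (fun h1 => Or.inr (by rw [h1, hinvol])),
     fun {a b c} hab hbc => by
       rcases hab with rfl | rfl
       · exact hbc
       · rcases hbc with rfl | rfl
         · exact Or.inr rfl
         · exact Or.inl (hinvol a)⟩⟩ with hs
  haveI : DecidableRel s.r := fun a b => inferInstanceAs (Decidable (_ ∨ _))
  let rep : Quotient s → A := Quotient.out
  have hmk : ∀ q : Quotient s, Quotient.mk s (rep q) = q := Quotient.out_eq
  have hmkinv : ∀ q : Quotient s, Quotient.mk s (einv (rep q)) = q := fun q =>
    (Quotient.sound (Or.inr (hinvol (rep q)).symm)).trans (hmk q)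
  let E : Quotient s × Bool ≃ A :=
    { toFun := fun p => cond p.2 (rep p.1) (einv (rep p.1))
      invFun := fun a => (Quotient.mk s a, decide (a = rep (Quotient.mk s a)))
      left_inv := by
        rintro ⟨q, b⟩
        cases b
        · refine Prod.ext (hmkinv q) ?_
          show decide (einv (rep q) = rep (Quotient.mk s (einv (rep q)))) = false
          rw [hmkinv q]
          exact decide_eq_false (hfix (rep q))
        · refine Prod.ext (hmk q) ?_
          show decide (rep q = rep (Quotient.mk s (rep q))) = true
          rw [hmk q]
          exact decide_eq_true rfl
      right_inv := by
        intro a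
        by_cases hq : a = rep (Quotient.mk s a)
        · show cond (decide _) _ _ = a
          rw [decide_eq_true hq, Bool.cond_true]
          exact hq.symm
        · show cond (decide _) _ _ = a
          rw [decide_eq_false hq, Bool.cond_false]
          rcases Quotient.mk_out (s := s) a with h1 | h1
          · exact absurd h1 hq
          · exact h1.symm }
  have hEinv : ∀ q b, einv (E (q, b)) = E (q, !b) := by
    rintro q b
    cases b
    · exact hinvol (rep q)
    · rfl
  have hsub : ((1 : Matrix A A ℂ) -
      Complex.I • Matrix.of (fun e f => if f = einv e then (1:ℂ) else 0)).submatrix E E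
      = (1 : Matrix (Quotient s) (Quotient s) ℂ) ⊗ₖ
        Matrix.of (fun b b' : Bool => if b = b' then (1:ℂ) else -Complex.I) := by
    ext ⟨q, b⟩ ⟨q', b'⟩
    simp only [Matrix.submatrix_apply, Matrix.sub_apply, Matrix.smul_apply, Matrix.of_apply,
      Matrix.kroneckerMap_apply, Matrix.one_apply, smul_eq_mul]
    have h1 : E (q, b) = E (q', b') ↔ q = q' ∧ b = b' := by
      rw [E.injective.eq_iff, Prod.ext_iff]
    have h2 : E (q', b') = einv (E (q, b)) ↔ q = q' ∧ b' = !b := by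
      rw [hEinv, E.injective.eq_iff, Prod.ext_iff, eq_comm (a := q')]
    by_cases hq : q = q'
    · subst hq
      cases b <;> cases b' <;> simp [h1, h2]
    · simp [hq, h1, h2]
  rw [← Matrix.det_submatrix_equiv_self E, hsub, Matrix.det_kronecker, Matrix.det_one,
    one_pow, one_mul]
  have hcard : Fintype.card (Quotient s) = m := by
    have h1 := Fintype.card_congr E
    rw [Fintype.card_prod, Fintype.card_bool, hm] at h1
    omega
  have hdetB : (Matrix.of (fun b b' : Bool => if b = b' then (1:ℂ) else -Complex.I)).det = 2 := by
    rw [← Matrix.det_submatrix_equiv_self finTwoEquiv, Matrix.det_fin_two]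
    simp only [Matrix.submatrix_apply, Matrix.of_apply, finTwoEquiv]
    norm_num [Complex.I_mul_I]
  rw [hdetB, hcard]

/-- Gnutzmann–Smilansky formula: for a finite connected graph with n vertices and
m edges and a Hermitian matrix H supported on its arcs,
det(I_{2m} - U(λ)) = (-1)^n·2^m·det(λI_n - H) / ∏_u (H_{uu} - λ - iΓ_u). -/
theorem gnutzmann_smilansky
    (V A : Type*) [Fintype V] [Fintype A] [DecidableEq V] [DecidableEq A]
    (n m : ℕ) (hn : Fintype.card V = n) (hm : Fintype.card A = 2 * m)
    (o t : A → V) (einv : A → A)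
    (hinvol : ∀ e, einv (einv e) = e)
    (ho : ∀ e, o (einv e) = t e)
    (hloop : ∀ e, o e ≠ t e)
    (hconn : ∀ u v : V, Relation.ReflTransGen (fun a b => ∃ e, o e = a ∧ t e = b) u v)
    (h γ : A → ℝ) (hpos : ∀ e, 0 ≤ h e)
    (hh : ∀ e, h (einv e) = h e) (hγ : ∀ e, γ (einv e) = -γ e)
    (w : A → ℂ) (hw : ∀ e, w e = Real.sqrt (h e) * Complex.exp (Complex.I * γ e))
    (H : Matrix V V ℂ)
    (hHoff : ∀ u v, u ≠ v → H u v =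
      ∑ f ∈ Finset.univ.filter (fun f => o f = u ∧ t f = v),
        (h f : ℂ) * Complex.exp (2 * Complex.I * γ f))
    (hHdiag : ∀ u, (H u u).im = 0)
    (Gam : V → ℝ)
    (hGam : ∀ u, Gam u = ∑ e ∈ Finset.univ.filter (fun e => o e = u), h e)
    (lam : ℂ)
    (hne : ∀ u, H u u - lam - Complex.I * Gam u ≠ 0)
    (x : V → ℂ) (hx : ∀ u, x u = 2 / (H u u - lam - Complex.I * Gam u))
    (U : Matrix A A ℂ)
    (hU : ∀ e f, U e f = if t e = o f then
      (if f = einv e then Complex.I else 0) - x (t e) * w e * w f else 0) :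
    (1 - U).det =
      (-1 : ℂ) ^ n * 2 ^ m * (lam • (1 : Matrix V V ℂ) - H).det /
        ∏ u : V, (H u u - lam - Complex.I * Gam u) := by
  classical
  have hfix : ∀ e, einv e ≠ e := fun e he => hloop e (by rw [← ho e, he])
  have htinv : ∀ f, t (einv f) = o f := fun f => by rw [← ho (einv f), hinvol]
  set d : V → ℂ := fun u => H u u - lam - Complex.I * Gam u with hd
  set J : Matrix A A ℂ := Matrix.of (fun e f => if f = einv e then (1:ℂ) else 0) with hJ
  set K : Matrix A A ℂ := 1 - Complex.I • J with hK
  set K' : Matrix A A ℂ := (2:ℂ)⁻¹ • (1 + Complex.I • J) with hK'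
  set P : Matrix A V ℂ := Matrix.of (fun e v => if t e = v then x v * w e else 0) with hP
  set Q : Matrix V A ℂ := Matrix.of (fun v f => if o f = v then w f else 0) with hQ
  have hJJ : J * J = 1 := by
    ext e g
    simp only [hJ, Matrix.mul_apply, Matrix.of_apply, Matrix.one_apply, ite_mul, one_mul,
      zero_mul, Finset.sum_ite_eq', Finset.mem_univ, if_true, hinvol]
    rcases eq_or_ne e g with rfl | hne'
    · simp
    · simp [hne', hne'.symm]
  have hKK' : K * K' = 1 := by
    have h1 : (Complex.I • J) * (Complex.I • J) = (-1 : ℂ) • (1 : Matrix A A ℂ) := by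
      rw [Matrix.smul_mul, Matrix.mul_smul, smul_smul, Complex.I_mul_I, hJJ]
    rw [hK, hK', Matrix.mul_smul, mul_add, sub_mul, sub_mul, Matrix.one_mul, Matrix.mul_one, h1]
    ext i j
    simp only [Matrix.smul_apply, Matrix.sub_apply, Matrix.add_apply, Matrix.one_apply,
      Matrix.smul_apply, smul_eq_mul]
    by_cases hij : i = j <;> simp [hij] <;> ring
  -- Step A : 1 - U = K + P * Q
  have hPQ : ∀ e f, (P * Q) e f = if t e = o f then x (t e) * w e * w f else 0 := by
    intro e f
    rw [Matrix.mul_apply, Finset.sum_eq_single (o f)]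
    · simp only [hP, hQ, Matrix.of_apply, if_pos rfl, eq_self_iff_true, if_true]
      by_cases h1 : t e = o f
      · rw [if_pos h1, if_pos h1, h1]
      · rw [if_neg h1, if_neg h1, zero_mul]
    · intro v _ hv
      simp only [hP, hQ, Matrix.of_apply]
      rw [show (if o f = v then w f else 0) = 0 from if_neg (fun hc => hv hc.symm), mul_zero]
    · intro habs
      exact absurd (Finset.mem_univ _) habs
  have hsplit : (1 : Matrix A A ℂ) - U = K + P * Q := by
    ext e f
    rw [Matrix.sub_apply, Matrix.add_apply, hPQ, hU, hK]
    simp only [Matrix.sub_apply, Matrix.smul_apply, Matrix.of_apply, hJ, smul_eq_mul]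
    by_cases h1 : f = einv e
    · have h2 : t e = o f := by rw [h1, ho]
      simp [h1, h2]
      ring
    · by_cases h2 : t e = o f <;> simp [h1, h2]
  -- factorization
  have hfact : (1 : Matrix A A ℂ) - U = K * ((1 : Matrix A A ℂ) + (K' * P) * Q) := by
    rw [hsplit, mul_add, mul_one]
    congr 1
    rw [← Matrix.mul_assoc, ← Matrix.mul_assoc, hKK', Matrix.one_mul]
  -- helper identities for w
  have hw2 : ∀ f, w f * w f = (h f : ℂ) * Complex.exp (2 * Complex.I * γ f) := by
    intro f
    rw [hw f, mul_mul_mul_comm, ← Complex.ofReal_mul, Real.mul_self_sqrt (hpos f),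
      ← Complex.exp_add]
    congr 2
    ring
  have hwinv : ∀ f, w f * w (einv f) = (h f : ℂ) := by
    intro f
    rw [hw f, hw (einv f), hh, hγ, mul_mul_mul_comm, ← Complex.ofReal_mul,
      Real.mul_self_sqrt (hpos f), ← Complex.exp_add, Complex.ofReal_neg]
    rw [show Complex.I * (γ f : ℂ) + Complex.I * (-(γ f : ℂ)) = 0 by ring, Complex.exp_zero,
      mul_one]
  have hGamC : ∀ u, (Gam u : ℂ) = ∑ e ∈ Finset.univ.filter (fun e => o e = u), (h e : ℂ) := by
    intro u
    rw [hGam u]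
    push_cast
    rfl
  -- entry computation for K' * P
  have hKP : ∀ f v, (K' * P) f v = (2:ℂ)⁻¹ * ((if t f = v then x v * w f else 0)
      + Complex.I * (if t (einv f) = v then x v * w (einv f) else 0)) := by
    intro f v
    rw [Matrix.mul_apply]
    have hsummand : ∀ g, K' f g * P g v
        = (2:ℂ)⁻¹ * ((if f = g then (1:ℂ) else 0) * P g v)
          + (2:ℂ)⁻¹ * (Complex.I * ((if g = einv f then (1:ℂ) else 0) * P g v)) := by
      intro g
      simp only [hK', hJ, Matrix.smul_apply, Matrix.add_apply, Matrix.one_apply,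
        Matrix.of_apply, smul_eq_mul]
      ring
    rw [Finset.sum_congr rfl fun g _ => hsummand g, Finset.sum_add_distrib,
      ← Finset.mul_sum, ← Finset.mul_sum]
    have e1 : (∑ g, (if f = g then (1:ℂ) else 0) * P g v) = P f v := by
      simp [ite_mul]
    have e2 : (∑ g, Complex.I * ((if g = einv f then (1:ℂ) else 0) * P g v))
        = Complex.I * P (einv f) v := by
      rw [← Finset.mul_sum]
      simp [ite_mul]
    rw [e1, e2]
    simp only [hP, Matrix.of_apply]
    ring
  have hterm : ∀ u v f, Q u f * (K' * P) f v =
      (if o f = u ∧ t f = v then (2:ℂ)⁻¹ * x v * ((h f : ℂ) * Complex.exp (2 * Complex.I * γ f))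
        else 0)
      + (if o f = u ∧ o f = v then (2:ℂ)⁻¹ * Complex.I * x v * (h f : ℂ) else 0) := by
    intro u v f
    rw [hKP, htinv f]
    simp only [hQ, Matrix.of_apply]
    by_cases h1 : o f = u
    · by_cases h2 : t f = v
      · by_cases h3 : o f = v
        · exact absurd (h3.trans h2.symm) (hloop f)
        · rw [if_pos h1, if_pos h2, if_neg h3, if_pos (⟨h1, h2⟩ : o f = u ∧ t f = v),
            if_neg (fun hc : o f = u ∧ o f = v => h3 hc.2), mul_zero, add_zero, add_zero,
            ← hw2 f]
          ring
      · by_cases h3 : o f = v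
        · rw [if_pos h1, if_neg h2, if_pos h3, if_neg (fun hc : o f = u ∧ t f = v => h2 hc.2),
            if_pos (⟨h1, h3⟩ : o f = u ∧ o f = v), zero_add, zero_add, ← hwinv f]
          ring
        · rw [if_pos h1, if_neg h2, if_neg h3, if_neg (fun hc : o f = u ∧ t f = v => h2 hc.2),
            if_neg (fun hc : o f = u ∧ o f = v => h3 hc.2)]
          simp
    · rw [if_neg h1, if_neg (fun hc : o f = u ∧ t f = v => h1 hc.1),
        if_neg (fun hc : o f = u ∧ o f = v => h1 hc.1), zero_mul, add_zero]
  -- the small matrix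
  have hM : (1 : Matrix V V ℂ) + Q * (K' * P)
      = (H - lam • (1 : Matrix V V ℂ)) * Matrix.diagonal (fun v => (d v)⁻¹) := by
    ext u v
    rw [Matrix.add_apply, Matrix.mul_apply, Finset.sum_congr rfl (fun f _ => hterm u v f),
      Finset.sum_add_distrib, Matrix.mul_diagonal, Matrix.sub_apply, Matrix.smul_apply,
      smul_eq_mul]
    have hdu : ∀ u, d u = H u u - lam - Complex.I * Gam u := fun u => by rw [hd]
    by_cases huv : u = v
    · subst huv
      simp only [Matrix.one_apply_eq]
      have hA : (∑ f, if o f = u ∧ t f = u then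
          (2:ℂ)⁻¹ * x u * ((h f : ℂ) * Complex.exp (2 * Complex.I * γ f)) else 0) = 0 :=
        Finset.sum_eq_zero fun f _ => if_neg (fun hc => hloop f (hc.1.trans hc.2.symm))
      have hB : (∑ f, if o f = u ∧ o f = u then (2:ℂ)⁻¹ * Complex.I * x u * (h f : ℂ) else 0)
          = (2:ℂ)⁻¹ * Complex.I * x u * (Gam u : ℂ) := by
        simp only [and_self]
        rw [← Finset.sum_filter, ← Finset.mul_sum, ← hGamC u]
      rw [hA, hB, hx u, ← hdu u]
      have h0 : d u ≠ 0 := hne u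
      rw [hdu u]
      rw [hdu u] at h0
      field_simp
      ring
    · simp only [Matrix.one_apply_ne huv]
      have hB : (∑ f, if o f = u ∧ o f = v then (2:ℂ)⁻¹ * Complex.I * x v * (h f : ℂ) else 0)
          = 0 :=
        Finset.sum_eq_zero fun f _ => if_neg (fun hc => huv (hc.1.symm.trans hc.2))
      have hA : (∑ f, if o f = u ∧ t f = v then
          (2:ℂ)⁻¹ * x v * ((h f : ℂ) * Complex.exp (2 * Complex.I * γ f)) else 0)
          = (2:ℂ)⁻¹ * x v * H u v := by
        rw [← Finset.sum_filter, ← Finset.mul_sum, ← hHoff u v huv]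
      rw [hA, hB, hx v, ← hdu v]
      have h0 : d v ≠ 0 := hne v
      field_simp
      ring
  -- determinant of K
  have hdetK : K.det = 2 ^ m := by
    rw [hK, hJ]
    exact det_one_sub_I_smul_invol einv hinvol hfix m hm
  -- assemble
  have hprod : (∏ u : V, d u) ≠ 0 := Finset.prod_ne_zero_iff.mpr fun u _ => hne u
  calc (1 - U).det = (K * ((1 : Matrix A A ℂ) + (K' * P) * Q)).det := by rw [← hfact]
    _ = K.det * ((1 : Matrix A A ℂ) + (K' * P) * Q).det := Matrix.det_mul _ _
    _ = K.det * ((1 : Matrix V V ℂ) + Q * (K' * P)).det := by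
        rw [Matrix.det_one_add_mul_comm]
    _ = 2 ^ m * ((H - lam • (1 : Matrix V V ℂ)).det * ∏ v, (d v)⁻¹) := by
        rw [hdetK, hM, Matrix.det_mul, Matrix.det_diagonal]
    _ = 2 ^ m * ((-1 : ℂ) ^ n * (lam • (1 : Matrix V V ℂ) - H).det * (∏ v, d v)⁻¹) := by
        rw [show H - lam • (1 : Matrix V V ℂ) = -(lam • (1 : Matrix V V ℂ) - H) from
          (neg_sub _ _).symm, Matrix.det_neg, hn, Finset.prod_inv_distrib]
    _ = (-1 : ℂ) ^ n * 2 ^ m * (lam • (1 : Matrix V V ℂ) - H).det / ∏ u : V, d u := by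
        field_simp
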